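/- Under Assumption 1 and η < (2L)^{-1}, Lv.k GP is an O(η^k) approximation of SPPM: for every k ≥ 1, the distance of the level-k reasoning iterate to the SPPM limit satisfies ‖ω_t^(k) − ω_t^*‖ ≤ η^k · L^{k−1} · Δ_max, where ω_t^* = lim_{j→∞} ω_t^(j). -/

import Mathlib

open Filter Topology

/-- Lv.k GP is an `O(η^k)` approximation of SPPM: for every `k ≥ 1`,
`‖ω_t^(k) − ω_t^*‖ ≤ η^k L^(k−1) Δ_max`. -/
lemma tail_bound {E : Type*} [NormedAddCommGroup E] (x : ℕ → E) (xs : E) (C r : ℝ)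
    (hC : 0 ≤ C) (hr0 : 0 ≤ r) (hr : 2 * r ≤ 1)
    (hlim : Tendsto x atTop (𝓝 xs)) (k : ℕ)
    (hstep : ∀ p, ‖x (k + p + 1) - x (k + p)‖ ≤ C * r ^ p) :
    ‖x k - xs‖ ≤ 2 * C := by
  have key : ∀ p, ‖x (k + p) - x k‖ ≤ 2 * C * (1 - r ^ p) := by
    intro p
    induction p with
    | zero => simp
    | succ p ih =>
      have h1 := hstep p
      have htri : ‖x (k + (p + 1)) - x k‖ ≤ ‖x (k + p + 1) - x (k + p)‖ + ‖x (k + p) - x k‖ := by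
        have := norm_add_le (x (k + p + 1) - x (k + p)) (x (k + p) - x k)
        simpa [sub_add_sub_cancel, show k + (p + 1) = k + p + 1 by ring] using this
      have hrp : (0:ℝ) ≤ r ^ p := pow_nonneg hr0 p
      have : r ^ (p + 1) = r * r ^ p := by ring
      rw [this]
      nlinarith [mul_nonneg hC hrp]
  have hl : Tendsto (fun p => ‖x (k + p) - x k‖) atTop (𝓝 ‖xs - x k‖) := by
    have h1 : Tendsto (fun p => x (k + p)) atTop (𝓝 xs) := by
      have := hlim.comp (tendsto_add_atTop_nat k)
      simpa [Function.comp_def, add_comm] using this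
    exact (h1.sub tendsto_const_nhds).norm
  have : ‖xs - x k‖ ≤ 2 * C := by
    refine le_of_tendsto hl (Filter.Eventually.of_forall fun p => ?_)
    have hrp : (0:ℝ) ≤ r ^ p := pow_nonneg hr0 p
    nlinarith [key p]
  rwa [norm_sub_rev]

set_option maxHeartbeats 1000000 in
theorem lvk_gp_approximates_sppm
    (m n : ℕ)
    (f g : EuclideanSpace ℝ (Fin m) → EuclideanSpace ℝ (Fin n) → ℝ)
    (hfdiff : ∀ φ, Differentiable ℝ (fun θ => f θ φ))
    (hgdiff : ∀ θ, Differentiable ℝ (fun φ => g θ φ))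
    (Lθθ Lθφ Lφθ Lφφ L : ℝ)
    (hL : L = max (max Lθθ Lθφ) (max Lφθ Lφφ))
    (hLip1 : ∀ (φ : EuclideanSpace ℝ (Fin n)) (θ₁ θ₂ : EuclideanSpace ℝ (Fin m)),
      ‖gradient (fun θ => f θ φ) θ₁ - gradient (fun θ => f θ φ) θ₂‖ ≤ Lθθ * ‖θ₁ - θ₂‖)
    (hLip2 : ∀ (θ : EuclideanSpace ℝ (Fin m)) (φ₁ φ₂ : EuclideanSpace ℝ (Fin n)),
      ‖gradient (fun θ' => f θ' φ₁) θ - gradient (fun θ' => f θ' φ₂) θ‖ ≤ Lθφ * ‖φ₁ - φ₂‖)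
    (hLip3 : ∀ (φ : EuclideanSpace ℝ (Fin n)) (θ₁ θ₂ : EuclideanSpace ℝ (Fin m)),
      ‖gradient (fun φ' => g θ₁ φ') φ - gradient (fun φ' => g θ₂ φ') φ‖ ≤ Lφθ * ‖θ₁ - θ₂‖)
    (hLip4 : ∀ (θ : EuclideanSpace ℝ (Fin m)) (φ₁ φ₂ : EuclideanSpace ℝ (Fin n)),
      ‖gradient (fun φ' => g θ φ') φ₁ - gradient (fun φ' => g θ φ') φ₂‖ ≤ Lφφ * ‖φ₁ - φ₂‖)
    (η : ℝ) (hη : 0 < η)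
    (θt : EuclideanSpace ℝ (Fin m)) (φt : EuclideanSpace ℝ (Fin n))
    (Θ : ℕ → EuclideanSpace ℝ (Fin m)) (Φ : ℕ → EuclideanSpace ℝ (Fin n))
    (hΘ0 : Θ 0 = θt) (hΦ0 : Φ 0 = φt)
    (hΘ : ∀ k : ℕ, Θ (k + 1) = θt - η • gradient (fun θ => f θ (Φ k)) θt)
    (hΦ : ∀ k : ℕ, Φ (k + 1) = φt - η • gradient (fun φ => g (Θ k) φ) φt)
    (Δmax : ℝ)
    (hΔ : Δmax = 2 * max ‖gradient (fun θ => f θ φt) θt‖ ‖gradient (fun φ => g θt φ) φt‖)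
    (hLpos : 0 < L) (hηL : η < (2 * L)⁻¹)
    (θs : EuclideanSpace ℝ (Fin m)) (φs : EuclideanSpace ℝ (Fin n))
    (hlim : Tendsto (fun k => (Θ k, Φ k)) atTop (𝓝 (θs, φs)))
    (k : ℕ) (hk : 1 ≤ k) :
    Real.sqrt (‖Θ k - θs‖ ^ 2 + ‖Φ k - φs‖ ^ 2) ≤ η ^ k * L ^ (k - 1) * Δmax := by
  set r : ℝ := η * L with hrdef
  have hr0 : 0 ≤ r := le_of_lt (mul_pos hη hLpos)
  have hr2 : 2 * r ≤ 1 := by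
    rw [inv_eq_one_div, lt_div_iff₀ (by positivity)] at hηL
    nlinarith
  have hΔ0 : 0 ≤ Δmax := by
    rw [hΔ]
    have := norm_nonneg (gradient (fun θ => f θ φt) θt)
    have h2 := le_max_left ‖gradient (fun θ => f θ φt) θt‖ ‖gradient (fun φ => g θt φ) φt‖
    linarith
  have hLθφ : Lθφ ≤ L := by rw [hL]; exact le_max_of_le_left (le_max_right _ _)
  have hLφθ : Lφθ ≤ L := by rw [hL]; exact le_max_of_le_right (le_max_left _ _)
  -- step increment bound
  have hstep : ∀ j : ℕ, ‖Θ (j + 1) - Θ j‖ ≤ η * r ^ j * (Δmax / 2) ∧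
      ‖Φ (j + 1) - Φ j‖ ≤ η * r ^ j * (Δmax / 2) := by
    intro j
    induction j with
    | zero =>
      constructor
      · rw [hΘ 0, hΘ0, hΦ0]
        have : θt - η • gradient (fun θ => f θ φt) θt - θt
            = -(η • gradient (fun θ => f θ φt) θt) := by abel
        rw [this, norm_neg, norm_smul, Real.norm_eq_abs, abs_of_pos hη]
        have h2 : ‖gradient (fun θ => f θ φt) θt‖ ≤ Δmax / 2 := by
          rw [hΔ]
          have := le_max_left ‖gradient (fun θ => f θ φt) θt‖ ‖gradient (fun φ => g θt φ) φt‖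
          linarith
        simpa using mul_le_mul_of_nonneg_left h2 (le_of_lt hη)
      · rw [hΦ 0, hΘ0, hΦ0]
        have : φt - η • gradient (fun φ => g θt φ) φt - φt
            = -(η • gradient (fun φ => g θt φ) φt) := by abel
        rw [this, norm_neg, norm_smul, Real.norm_eq_abs, abs_of_pos hη]
        have h2 : ‖gradient (fun φ => g θt φ) φt‖ ≤ Δmax / 2 := by
          rw [hΔ]
          have := le_max_right ‖gradient (fun θ => f θ φt) θt‖ ‖gradient (fun φ => g θt φ) φt‖
          linarith
        simpa using mul_le_mul_of_nonneg_left h2 (le_of_lt hη)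
    | succ j ih =>
      obtain ⟨ihΘ, ihΦ⟩ := ih
      constructor
      · rw [hΘ (j + 1), hΘ j]
        have heq : θt - η • gradient (fun θ => f θ (Φ (j + 1))) θt
            - (θt - η • gradient (fun θ => f θ (Φ j)) θt)
            = η • (gradient (fun θ => f θ (Φ j)) θt - gradient (fun θ => f θ (Φ (j + 1))) θt) := by
          rw [smul_sub]; abel
        rw [heq, norm_smul, Real.norm_eq_abs, abs_of_pos hη]
        have h1 := hLip2 θt (Φ j) (Φ (j + 1))
        have h2 : ‖Φ j - Φ (j + 1)‖ ≤ η * r ^ j * (Δmax / 2) := by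
          rw [norm_sub_rev]; exact ihΦ
        have hnn : (0:ℝ) ≤ ‖Φ j - Φ (j + 1)‖ := norm_nonneg _
        have h3 : ‖gradient (fun θ => f θ (Φ j)) θt - gradient (fun θ => f θ (Φ (j + 1))) θt‖
            ≤ L * (η * r ^ j * (Δmax / 2)) := by
          calc _ ≤ Lθφ * ‖Φ j - Φ (j + 1)‖ := h1
            _ ≤ L * ‖Φ j - Φ (j + 1)‖ := mul_le_mul_of_nonneg_right hLθφ hnn
            _ ≤ L * (η * r ^ j * (Δmax / 2)) :=
                mul_le_mul_of_nonneg_left h2 (le_of_lt hLpos)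
        calc η * ‖gradient (fun θ => f θ (Φ j)) θt - gradient (fun θ => f θ (Φ (j + 1))) θt‖
            ≤ η * (L * (η * r ^ j * (Δmax / 2))) :=
              mul_le_mul_of_nonneg_left h3 (le_of_lt hη)
          _ = η * r ^ (j + 1) * (Δmax / 2) := by rw [hrdef]; ring
      · rw [hΦ (j + 1), hΦ j]
        have heq : φt - η • gradient (fun φ => g (Θ (j + 1)) φ) φt
            - (φt - η • gradient (fun φ => g (Θ j) φ) φt)
            = η • (gradient (fun φ => g (Θ j) φ) φt - gradient (fun φ => g (Θ (j + 1)) φ) φt) := by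
          rw [smul_sub]; abel
        rw [heq, norm_smul, Real.norm_eq_abs, abs_of_pos hη]
        have h1 := hLip3 φt (Θ j) (Θ (j + 1))
        have h2 : ‖Θ j - Θ (j + 1)‖ ≤ η * r ^ j * (Δmax / 2) := by
          rw [norm_sub_rev]; exact ihΘ
        have hnn : (0:ℝ) ≤ ‖Θ j - Θ (j + 1)‖ := norm_nonneg _
        have h3 : ‖gradient (fun φ => g (Θ j) φ) φt - gradient (fun φ => g (Θ (j + 1)) φ) φt‖
            ≤ L * (η * r ^ j * (Δmax / 2)) := by
          calc _ ≤ Lφθ * ‖Θ j - Θ (j + 1)‖ := h1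
            _ ≤ L * ‖Θ j - Θ (j + 1)‖ := mul_le_mul_of_nonneg_right hLφθ hnn
            _ ≤ L * (η * r ^ j * (Δmax / 2)) :=
                mul_le_mul_of_nonneg_left h2 (le_of_lt hLpos)
        calc η * ‖gradient (fun φ => g (Θ j) φ) φt - gradient (fun φ => g (Θ (j + 1)) φ) φt‖
            ≤ η * (L * (η * r ^ j * (Δmax / 2))) :=
              mul_le_mul_of_nonneg_left h3 (le_of_lt hη)
          _ = η * r ^ (j + 1) * (Δmax / 2) := by rw [hrdef]; ring
  -- extract component limits
  have hΘlim : Tendsto Θ atTop (𝓝 θs) := (continuous_fst.tendsto (θs, φs)).comp hlim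
  have hΦlim : Tendsto Φ atTop (𝓝 φs) := (continuous_snd.tendsto (θs, φs)).comp hlim
  set C : ℝ := η * r ^ k * (Δmax / 2) with hCdef
  have hC0 : 0 ≤ C := by positivity
  have hstepΘ : ∀ p, ‖Θ (k + p + 1) - Θ (k + p)‖ ≤ C * r ^ p := fun p => by
    have := (hstep (k + p)).1
    calc ‖Θ (k + p + 1) - Θ (k + p)‖ ≤ η * r ^ (k + p) * (Δmax / 2) := this
      _ = C * r ^ p := by rw [hCdef, pow_add]; ring
  have hstepΦ : ∀ p, ‖Φ (k + p + 1) - Φ (k + p)‖ ≤ C * r ^ p := fun p => by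
    have := (hstep (k + p)).2
    calc ‖Φ (k + p + 1) - Φ (k + p)‖ ≤ η * r ^ (k + p) * (Δmax / 2) := this
      _ = C * r ^ p := by rw [hCdef, pow_add]; ring
  have hΘb : ‖Θ k - θs‖ ≤ 2 * C := tail_bound Θ θs C r hC0 hr0 hr2 hΘlim k hstepΘ
  have hΦb : ‖Φ k - φs‖ ≤ 2 * C := tail_bound Φ φs C r hC0 hr0 hr2 hΦlim k hstepΦ
  -- final arithmetic
  obtain ⟨k', rfl⟩ : ∃ k', k = k' + 1 := ⟨k - 1, (Nat.succ_pred_eq_of_pos hk).symm⟩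
  have hkk : k' + 1 - 1 = k' := rfl
  rw [hkk]
  set T : ℝ := η ^ (k' + 1) * L ^ k' * Δmax with hTdef
  have hT0 : 0 ≤ T := by positivity
  have hB : 2 * C = r * T := by
    rw [hCdef, hTdef, hrdef]
    rw [show (η * L) ^ (k' + 1) = η ^ (k' + 1) * L ^ (k' + 1) by rw [mul_pow]]
    ring
  have ha : ‖Θ (k' + 1) - θs‖ ≤ r * T := hB ▸ hΘb
  have hb : ‖Φ (k' + 1) - φs‖ ≤ r * T := hB ▸ hΦb
  have ha0 := norm_nonneg (Θ (k' + 1) - θs)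
  have hb0 := norm_nonneg (Φ (k' + 1) - φs)
  have hsq : ‖Θ (k' + 1) - θs‖ ^ 2 + ‖Φ (k' + 1) - φs‖ ^ 2 ≤ 2 * (r * T) ^ 2 := by
    nlinarith
  calc Real.sqrt (‖Θ (k' + 1) - θs‖ ^ 2 + ‖Φ (k' + 1) - φs‖ ^ 2)
      ≤ Real.sqrt (2 * (r * T) ^ 2) := Real.sqrt_le_sqrt hsq
    _ = Real.sqrt 2 * (r * T) := by
        rw [Real.sqrt_mul (by norm_num), Real.sqrt_sq (by positivity)]
    _ ≤ T := by
        have hs2 : Real.sqrt 2 ≤ 3 / 2 := by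
          nlinarith [Real.sq_sqrt (show (0:ℝ) ≤ 2 by norm_num), Real.sqrt_nonneg 2]
        have hrt0 : (0:ℝ) ≤ r * T := mul_nonneg hr0 hT0
        have h1 : Real.sqrt 2 * (r * T) ≤ 3 / 2 * (r * T) :=
          mul_le_mul_of_nonneg_right hs2 hrt0
        have h2 : r * T ≤ 1 / 2 * T := by nlinarith
        linarith
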